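/- Let G be an étale Hausdorff groupoid that is the union of a nested increasing sequence of open subgroupoids G_n with closure(G_n) ⊆ G_{n+1}. Then the dynamic asymptotic dimension of G is at most the liminf of the dynamic asymptotic dimensions of the G_n. -/
import Mathlib


class GroupoidLike (G : Type*) where
  src : G → G
  rng : G → G
  inv : G → G
  mul : G → G → G

open GroupoidLike

def units (G : Type*) [GroupoidLike G] : Set G := {g | src g = g}

class EtaleGroupoid (G : Type*) [TopologicalSpace G] [GroupoidLike G] : Prop where
  cont_src : Continuous (src : G → G)
  cont_rng : Continuous (rng : G → G)
  cont_inv : Continuous (inv : G → G)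
  localHomeo_src : IsLocalHomeomorph (src : G → G)
  localHomeo_rng : IsLocalHomeomorph (rng : G → G)
  src_src : ∀ g : G, src (src g) = src g
  rng_src : ∀ g : G, rng (src g) = src g
  src_rng : ∀ g : G, src (rng g) = rng g
  rng_rng : ∀ g : G, rng (rng g) = rng g
  src_inv : ∀ g : G, src (inv g) = rng g
  rng_inv : ∀ g : G, rng (inv g) = src g
  inv_inv : ∀ g : G, inv (inv g) = g
  src_mul : ∀ g h : G, src g = rng h → src (mul g h) = src h
  rng_mul : ∀ g h : G, src g = rng h → rng (mul g h) = rng g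
  mul_assoc : ∀ g h k : G, src g = rng h → src h = rng k →
    mul (mul g h) k = mul g (mul h k)
  inv_mul : ∀ g : G, mul (inv g) g = src g
  mul_inv : ∀ g : G, mul g (inv g) = rng g
  mul_unit : ∀ g : G, mul g (src g) = g
  unit_mul : ∀ g : G, mul (rng g) g = g
  inv_mul_rev : ∀ g h : G, src g = rng h → inv (mul g h) = mul (inv h) (inv g)

section GpdDefs

variable {G : Type*} [GroupoidLike G]

/-- The restriction `G|_A = {g : s(g), r(g) ∈ A}`. -/
def restrict (A : Set G) : Set G := {g | src g ∈ A ∧ rng g ∈ A}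

/-- Membership in the subgroupoid generated by `S`. -/
inductive gen (S : Set G) : G → Prop
  | base {g : G} : g ∈ S → gen S g
  | inv {g : G} : gen S g → gen S (GroupoidLike.inv g)
  | mul {g h : G} : gen S g → gen S h → src g = rng h → gen S (GroupoidLike.mul g h)

/-- The subgroupoid generated by `S`, as a set. -/
def Gen (S : Set G) : Set G := {g | gen S g}

/-- Product of two subsets of a groupoid (composable products only). -/
def setMul (K L : Set G) : Set G :=
  {x | ∃ g ∈ K, ∃ h ∈ L, src g = rng h ∧ x = GroupoidLike.mul g h}

/-- Powers of a subset under groupoid multiplication. -/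
def spow (K : Set G) : ℕ → Set G
  | 0 => units G
  | 1 => K
  | (n + 2) => setMul K (spow K (n + 1))

/-- A subset of `G` that is a subgroupoid. -/
def IsSubgroupoid (S : Set G) : Prop :=
  (∀ g ∈ S, GroupoidLike.inv g ∈ S) ∧ (∀ g ∈ S, src g ∈ S) ∧ (∀ g ∈ S, rng g ∈ S) ∧
    ∀ g h : G, g ∈ S → h ∈ S → src g = rng h → GroupoidLike.mul g h ∈ S

variable [TopologicalSpace G]

/-- `K` belongs to `𝒪_c(G)`: open, relatively compact, and
`K = K ∪ K⁻¹ ∪ s(K) ∪ r(K)`. -/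
def memOc (K : Set G) : Prop :=
  IsOpen K ∧ IsCompact (closure K) ∧ GroupoidLike.inv '' K ⊆ K ∧
    src '' K ⊆ K ∧ rng '' K ⊆ K

/-- The (open) subgroupoid with underlying set `S ⊆ G` has dynamic asymptotic dimension
at most `d` (all notions taken relative to the subspace `S`). -/
def dadLEOn (S : Set G) (d : ℕ) : Prop :=
  ∀ K : Set G, K ⊆ S → (∃ O : Set G, IsOpen O ∧ K = O ∩ S) →
    IsCompact (closure K ∩ S) →
    ∃ U : Fin (d + 1) → Set G,
      (∀ i, (∃ O : Set G, IsOpen O ∧ U i = O ∩ S) ∧ U i ⊆ units G ∩ S) ∧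
      (src '' K ∪ rng '' K) ⊆ (⋃ i, U i) ∧
      ∀ i, IsCompact (closure (Gen (K ∩ restrict (U i))) ∩ S)

/-- The dynamic asymptotic dimension of the subgroupoid `S ⊆ G`, as an extended natural
number (`⊤` if no finite bound exists). -/
noncomputable def dadOn (S : Set G) : ℕ∞ :=
  sInf {e : ℕ∞ | ∃ d : ℕ, e = (d : ℕ∞) ∧ dadLEOn S d}

end GpdDefs

/-- The dynamic asymptotic dimension of `G`. -/
noncomputable def dad (G : Type*) [TopologicalSpace G] [GroupoidLike G] : ℕ∞ :=
  dadOn (Set.univ : Set G)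


section Aux

variable {G : Type*} [GroupoidLike G]

lemma gen_empty {g : G} (h : gen (∅ : Set G) g) : False := by
  induction h with
  | base h => exact h
  | inv _ ih => exact ih
  | mul _ _ _ ih₁ _ => exact ih₁

lemma gen_subset {S T : Set G} (hT : IsSubgroupoid T) (h : S ⊆ T) : Gen S ⊆ T := by
  intro g hg
  induction hg with
  | base hg => exact h hg
  | inv _ ih => exact hT.1 _ ih
  | mul _ _ hsr ih₁ ih₂ => exact hT.2.2.2 _ _ ih₁ ih₂ hsr

variable [TopologicalSpace G]

lemma dadLEOn_mono {S : Set G} {d' d : ℕ} (hdd : d' ≤ d) (h : dadLEOn S d') :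
    dadLEOn S d := by
  intro K hKS hKopen hKc
  obtain ⟨U, hU1, hU2, hU3⟩ := h K hKS hKopen hKc
  refine ⟨fun i => if hi : (i : ℕ) < d' + 1 then U ⟨i, hi⟩ else ∅, fun i => ?_, ?_, fun i => ?_⟩
  · by_cases hi : (i : ℕ) < d' + 1
    · simp only [dif_pos hi]; exact hU1 ⟨i, hi⟩
    · simp only [dif_neg hi]
      exact ⟨⟨∅, isOpen_empty, by simp⟩, by simp⟩
  · intro x hx
    obtain ⟨_, ⟨j, rfl⟩, hxj⟩ := hU2 hx
    exact Set.mem_iUnion.mpr ⟨⟨j.1, Nat.lt_of_lt_of_le j.2 (by omega)⟩,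
      by simp only [dif_pos j.2]; exact hxj⟩
  · by_cases hi : (i : ℕ) < d' + 1
    · simp only [dif_pos hi]; exact hU3 ⟨i, hi⟩
    · simp only [dif_neg hi]
      have h1 : K ∩ restrict (∅ : Set G) = ∅ := by simp [restrict]
      have h2 : Gen (K ∩ restrict (∅ : Set G)) = ∅ := by
        ext g
        simp only [Set.mem_empty_iff_false, iff_false]
        intro hg
        rw [h1] at hg
        exact gen_empty hg
      simp [h2]

lemma dadOn_le_elim {S : Set G} {d : ℕ} (h : dadOn S ≤ (d : ℕ∞)) : dadLEOn S d := by
  by_contra hc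
  have hall : ∀ e ∈ {e : ℕ∞ | ∃ d' : ℕ, e = (d' : ℕ∞) ∧ dadLEOn S d'},
      ((d : ℕ∞) + 1) ≤ e := by
    rintro e ⟨d', rfl, hd'⟩
    by_contra hle
    push_neg at hle
    have hlt : d' < d + 1 := by exact_mod_cast (by push_cast; exact hle : (d' : ℕ∞) < ((d : ℕ) + 1 : ℕ))
    exact hc (dadLEOn_mono (by omega : d' ≤ d) hd')
  have h2 : ((d : ℕ∞) + 1) ≤ dadOn S := le_sInf hall
  have h3 : ((d : ℕ∞) + 1) ≤ (d : ℕ∞) := h2.trans h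
  have : (d + 1 : ℕ) ≤ d := by exact_mod_cast (by push_cast; exact h3 : ((d + 1 : ℕ) : ℕ∞) ≤ (d : ℕ))
  omega

end Aux

/-- If an étale Hausdorff groupoid `G` is the union of a nested sequence of open
subgroupoids `Gₙ` with `closure (Gₙ) ⊆ G_{n+1}`, then
`dad G ≤ liminf dad (Gₙ)`. -/
theorem stmt4 {G : Type*} [TopologicalSpace G] [T2Space G] [GroupoidLike G]
    [EtaleGroupoid G]
    (Gn : ℕ → Set G) (hsub : ∀ n, IsSubgroupoid (Gn n)) (hopen : ∀ n, IsOpen (Gn n))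
    (hmono : ∀ n, Gn n ⊆ Gn (n + 1))
    (hnested : ∀ n, closure (Gn n) ⊆ Gn (n + 1))
    (hunion : (⋃ n, Gn n) = Set.univ) :
    dad G ≤ Filter.liminf (fun n => dadOn (Gn n)) Filter.atTop := by
  have cases_enat : ∀ e : ℕ∞, e = ⊤ ∨ ∃ d : ℕ, e = (d : ℕ∞) := by
    intro e
    cases e with
    | top => exact Or.inl rfl
    | coe d => exact Or.inr ⟨d, rfl⟩
  rcases cases_enat (Filter.liminf (fun n => dadOn (Gn n)) Filter.atTop) with htop | ⟨d, hd⟩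
  · rw [htop]; exact le_top
  rw [hd]
  have hmono' : ∀ {m n : ℕ}, m ≤ n → Gn m ⊆ Gn n := by
    intro m n h
    exact monotone_nat_of_le_succ hmono h
  -- from the liminf, extract frequently small dadOn
  have key : ∀ N : ℕ, ∃ n ≥ N, dadOn (Gn n) ≤ (d : ℕ∞) := by
    intro N
    by_contra hc
    push_neg at hc
    have hev : ∀ᶠ n in Filter.atTop, ((d : ℕ∞) + 1) ≤ dadOn (Gn n) := by
      rw [Filter.eventually_atTop]
      refine ⟨N, fun n hn => ?_⟩
      have := hc n hn
      exact Order.add_one_le_of_lt this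
    have h2 : ((d : ℕ∞) + 1) ≤ Filter.liminf (fun n => dadOn (Gn n)) Filter.atTop :=
      Filter.le_liminf_of_le (by isBoundedDefault) hev
    rw [hd] at h2
    have : (d + 1 : ℕ) ≤ d := by exact_mod_cast (by push_cast; exact h2 : ((d + 1 : ℕ) : ℕ∞) ≤ (d : ℕ))
    omega
  suffices hdle : dadLEOn (Set.univ : Set G) d by
    exact sInf_le ⟨d, rfl, hdle⟩
  intro K _ hKopen hKc
  obtain ⟨O, hO, hKO⟩ := hKopen
  have hKopen' : IsOpen K := by rw [hKO, Set.inter_univ]; exact hO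
  have hKc' : IsCompact (closure K) := by simpa using hKc
  obtain ⟨m, hm⟩ : ∃ m, closure K ⊆ Gn m := by
    refine hKc'.elim_directed_cover Gn hopen ?_ ?_
    · rw [hunion]; exact Set.subset_univ _
    · exact (monotone_nat_of_le_succ hmono).directed_le
  obtain ⟨n, hn, hle⟩ := key m
  have hdd : dadLEOn (Gn n) d := dadOn_le_elim hle
  have hmK : closure K ⊆ Gn n := hm.trans (hmono' hn)
  have hKG : K ⊆ Gn n := subset_closure.trans hmK
  obtain ⟨U, hU1, hU2, hU3⟩ := hdd K hKG ⟨K, hKopen', (Set.inter_eq_left.mpr hKG).symm⟩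
    (by rw [Set.inter_eq_left.mpr hmK]; exact hKc')
  refine ⟨U, fun i => ⟨?_, ?_⟩, hU2, fun i => ?_⟩
  · obtain ⟨Oi, hOi, hUi⟩ := (hU1 i).1
    exact ⟨Oi ∩ Gn n, hOi.inter (hopen n), by rw [Set.inter_univ]; exact hUi⟩
  · exact (hU1 i).2.trans (Set.inter_subset_inter_right _ (Set.subset_univ _))
  · have hE : Gen (K ∩ restrict (U i)) ⊆ Gn n :=
      gen_subset (hsub n) (Set.inter_subset_left.trans hKG)
    have hC := hU3 i
    have hCcl : IsClosed (closure (Gen (K ∩ restrict (U i))) ∩ Gn n) := hC.isClosed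
    have hsubC : closure (Gen (K ∩ restrict (U i))) ⊆
        closure (Gen (K ∩ restrict (U i))) ∩ Gn n :=
      closure_minimal (fun x hx => ⟨subset_closure hx, hE hx⟩) hCcl
    have heq : closure (Gen (K ∩ restrict (U i))) =
        closure (Gen (K ∩ restrict (U i))) ∩ Gn n :=
      Set.Subset.antisymm hsubC Set.inter_subset_left
    rw [Set.inter_univ, heq]
    exact hC
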